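/- arXiv:1001.2952 — 7 statements merged into one kernel-verified Lean document; each statement's English description precedes it below -/
import Mathlib

section
/- (Lemma 1, first direction.) Let N ≥ 2, let T : ℝ^{N-1} → ℝ^m be a linear map, y ∈ ℝ^m, and let Q : ℝ → ℝ be any function. Let D : ℝ^N → ℝ^{N-1} be the discrete difference operator and D† = Dᵀ (D Dᵀ)⁻¹ its pseudo-inverse. If û ∈ ℝ^{N-1} minimizes g(u) = ‖T u - y‖² + Σ_{j=1}^{N-1} Q(u_j) over ℝ^{N-1}, then x̂ = D† û minimizes J(x) = ‖T D x - y‖² + Σ_{j=1}^{N-1} Q(x_{j+1} - x_j) over ℝ^N. -/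
open Matrix BigOperators

/-- The discrete difference operator `D : ℝ^N → ℝ^{N-1}`, as an
`(N-1) × N` matrix: `(Dx)_j = x_{j+1} - x_j`. -/
noncomputable def Dmat (N : ℕ) : Matrix (Fin (N - 1)) (Fin N) ℝ :=
  fun i j => if (j : ℕ) = (i : ℕ) + 1 then 1 else if (j : ℕ) = (i : ℕ) then -1 else 0

/-- The inclusion `{1, …, N-1} → {1, …, N}`, sending `j` to `j`. -/
def idx (N : ℕ) (j : Fin (N - 1)) : Fin N :=
  ⟨j.1, by have := j.2; omega⟩

/-- The shifted inclusion `{1, …, N-1} → {1, …, N}`, sending `j` to `j + 1`. -/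
def idx1 (N : ℕ) (j : Fin (N - 1)) : Fin N :=
  ⟨j.1 + 1, by have := j.2; omega⟩

/-- The objective `g(u) = ‖Tu - y‖² + Σ_j Q(u_j)` on `ℝ^{N-1}`. -/
noncomputable def gfun (N m : ℕ) (T : Matrix (Fin m) (Fin (N - 1)) ℝ) (y : Fin m → ℝ)
    (Q : ℝ → ℝ) (u : Fin (N - 1) → ℝ) : ℝ :=
  ∑ i, (T.mulVec u - y) i ^ 2 + ∑ j, Q (u j)

/-- The objective `J(x) = ‖T D x - y‖² + Σ_j Q(x_{j+1} - x_j)` on `ℝ^N`. -/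
noncomputable def Jfun (N m : ℕ) (T : Matrix (Fin m) (Fin (N - 1)) ℝ) (y : Fin m → ℝ)
    (Q : ℝ → ℝ) (x : Fin N → ℝ) : ℝ :=
  ∑ i, (T.mulVec ((Dmat N).mulVec x) - y) i ^ 2
    + ∑ j : Fin (N - 1), Q (x (idx1 N j) - x (idx N j))

lemma Dmat_mulVec_apply (N : ℕ) (x : Fin N → ℝ) (i : Fin (N - 1)) :
    (Dmat N).mulVec x i = x (idx1 N i) - x (idx N i) := by
  have h : (Dmat N).mulVec x i
      = ∑ j : Fin N, ((if j = idx1 N i then x j else 0) + (if j = idx N i then -x j else 0)) := by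
    unfold Matrix.mulVec dotProduct Dmat
    refine Finset.sum_congr rfl fun j _ => ?_
    simp only [Fin.ext_iff, idx, idx1]
    split_ifs <;> first | ring1 | (exfalso; omega) | simp_all
  rw [h, Finset.sum_add_distrib]
  simp [sub_eq_add_neg]

lemma DT_mulVec_eq_zero (N : ℕ) (v : Fin (N - 1) → ℝ)
    (hv : (Dmat N)ᵀ.mulVec v = 0) : v = 0 := by
  have hcomp : ∀ j : Fin N, ∑ i, Dmat N i j * v i = 0 := by
    intro j
    have := congrFun hv j
    simpa [Matrix.mulVec, dotProduct, Matrix.transpose_apply] using this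
  have key : ∀ k : ℕ, ∀ hk : k < N - 1, v ⟨k, hk⟩ = 0 := by
    intro k
    induction k with
    | zero =>
      intro hk
      have h0 := hcomp ⟨0, by omega⟩
      have : ∑ i : Fin (N - 1), Dmat N i ⟨0, by omega⟩ * v i
          = ∑ i : Fin (N - 1), (if i = ⟨0, hk⟩ then -v i else 0) := by
        refine Finset.sum_congr rfl fun i _ => ?_
        unfold Dmat
        simp only [Fin.ext_iff]
        split_ifs <;> first | ring1 | (exfalso; omega) | simp_all
      rw [this] at h0
      simp at h0
      linarith
    | succ k ih =>
      intro hk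
      have hkk : k < N - 1 := by omega
      have h0 := hcomp ⟨k + 1, by omega⟩
      have : ∑ i : Fin (N - 1), Dmat N i ⟨k + 1, by omega⟩ * v i
          = ∑ i : Fin (N - 1), ((if i = ⟨k, hkk⟩ then v i else 0)
              + (if i = ⟨k + 1, hk⟩ then -v i else 0)) := by
        refine Finset.sum_congr rfl fun i _ => ?_
        unfold Dmat
        simp only [Fin.ext_iff]
        split_ifs <;> first | ring1 | (exfalso; omega) | simp_all
      rw [this, Finset.sum_add_distrib] at h0
      simp only [Finset.sum_ite_eq', Finset.mem_univ, if_true] at h0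
      have hvk := ih hkk
      rw [hvk] at h0
      linarith
  funext i
  have := key i.1 i.2
  simpa using this

lemma DDT_isUnit (N : ℕ) : IsUnit (Dmat N * (Dmat N)ᵀ) := by
  rw [← Matrix.mulVec_injective_iff_isUnit]
  intro a b hab
  have hzero : (Dmat N * (Dmat N)ᵀ).mulVec (a - b) = 0 := by
    rw [Matrix.mulVec_sub, hab, sub_self]
  have hz : (Dmat N)ᵀ.mulVec (a - b) = 0 := by
    rw [← dotProduct_self_eq_zero]
    have : (Dmat N)ᵀ.mulVec (a - b) ⬝ᵥ (Dmat N)ᵀ.mulVec (a - b)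
        = (a - b) ⬝ᵥ (Dmat N * (Dmat N)ᵀ).mulVec (a - b) := by
      rw [← Matrix.mulVec_mulVec, Matrix.dotProduct_mulVec, Matrix.vecMul_transpose]
      exact dotProduct_comm _ _
    rw [this, hzero, dotProduct_zero]
  have := DT_mulVec_eq_zero N (a - b) hz
  exact sub_eq_zero.mp this

lemma Jfun_eq_gfun (N m : ℕ) (T : Matrix (Fin m) (Fin (N - 1)) ℝ) (y : Fin m → ℝ)
    (Q : ℝ → ℝ) (x : Fin N → ℝ) :
    Jfun N m T y Q x = gfun N m T y Q ((Dmat N).mulVec x) := by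
  unfold Jfun gfun
  congr 1
  exact Finset.sum_congr rfl fun j _ => by rw [Dmat_mulVec_apply]

/-- Lemma 1, first direction: if `û` minimizes `g` over `ℝ^{N-1}`, then
`x̂ = D† û` minimizes `J` over `ℝ^N`, where `D† = Dᵀ (D Dᵀ)⁻¹`. -/
theorem pseudoinverse_of_minimizer_minimizes
    (N m : ℕ) (hN : 2 ≤ N) (T : Matrix (Fin m) (Fin (N - 1)) ℝ) (y : Fin m → ℝ)
    (Q : ℝ → ℝ) (uhat : Fin (N - 1) → ℝ)
    (hmin : ∀ u : Fin (N - 1) → ℝ, gfun N m T y Q uhat ≤ gfun N m T y Q u) :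
    ∀ x : Fin N → ℝ,
      Jfun N m T y Q (((Dmat N)ᵀ * (Dmat N * (Dmat N)ᵀ)⁻¹).mulVec uhat)
        ≤ Jfun N m T y Q x := by
  intro x
  have hunit := DDT_isUnit N
  have hinv : Dmat N * ((Dmat N)ᵀ * (Dmat N * (Dmat N)ᵀ)⁻¹) = 1 := by
    rw [← Matrix.mul_assoc]
    exact Matrix.mul_nonsing_inv _ ((Matrix.isUnit_iff_isUnit_det _).mp hunit)
  have hDx : (Dmat N).mulVec (((Dmat N)ᵀ * (Dmat N * (Dmat N)ᵀ)⁻¹).mulVec uhat) = uhat := by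
    rw [Matrix.mulVec_mulVec, hinv, Matrix.one_mulVec]
  rw [Jfun_eq_gfun, Jfun_eq_gfun, hDx]
  exact hmin _
end

section
/- (Theorem 2, proof step.) Let k ≥ 1, let a₁, …, a_k and C be nonzero integers, 0 < ε ≤ 1/(4 Σᵢ |aᵢ|), P ≥ 2k/ε², and let f : ℝ^{2k} → ℝ be f(x) = (C - Σ_{i=1}^k aᵢ xᵢ)² + P · Σ_{i=1}^k (1 - xᵢ - x_{i+k})² + Σ_{i=1}^{2k} min(1, xᵢ²/ε²). If x ∈ ℝ^{2k} satisfies f(x) < k + 1/4, then for every i ∈ {1, …, k} at least one of |xᵢ| and |x_{i+k}| exceeds ε. -/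
open BigOperators Finset

/-- The inclusion `{1, …, k} → {1, …, 2k}`, `i ↦ i`. -/
def lo (k : ℕ) (i : Fin k) : Fin (2 * k) :=
  ⟨i.1, by have := i.2; omega⟩

/-- The shifted inclusion `{1, …, k} → {1, …, 2k}`, `i ↦ i + k`. -/
def hi (k : ℕ) (i : Fin k) : Fin (2 * k) :=
  ⟨i.1 + k, by have := i.2; omega⟩

/-- The objective function of Theorem 2:
`f(x) = (C - Σᵢ aᵢ xᵢ)² + P·Σᵢ (1 - xᵢ - x_{i+k})² + Σᵢ min(1, xᵢ²/ε²)`. -/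
noncomputable def ffun (k : ℕ) (a : Fin k → ℤ) (C : ℤ) (P ε : ℝ)
    (x : Fin (2 * k) → ℝ) : ℝ :=
  ((C : ℝ) - ∑ i : Fin k, (a i : ℝ) * x (lo k i)) ^ 2
    + P * ∑ i : Fin k, (1 - x (lo k i) - x (hi k i)) ^ 2
    + ∑ i : Fin (2 * k), min 1 (x i ^ 2 / ε ^ 2)

/-- Theorem 2, proof step: if `f(x) < k + 1/4`, then for every `i` at least one
of `|xᵢ|` and `|x_{i+k}|` exceeds `ε`. -/
theorem exists_large_coordinate_of_ffun_lt
    (k : ℕ) (hk : 1 ≤ k) (a : Fin k → ℤ) (C : ℤ)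
    (ha : ∀ i, a i ≠ 0) (hC : C ≠ 0) (ε P : ℝ)
    (hε : 0 < ε) (hε' : ε ≤ 1 / (4 * ∑ i, |(a i : ℝ)|)) (hP : 2 * k / ε ^ 2 ≤ P)
    (x : Fin (2 * k) → ℝ) (hx : ffun k a C P ε x < k + 1 / 4) :
    ∀ i : Fin k, ε < |x (lo k i)| ∨ ε < |x (hi k i)| := by
  intro i
  by_contra h
  push_neg at h
  obtain ⟨h1, h2⟩ := h
  have hS : (1 : ℝ) ≤ ∑ j, |(a j : ℝ)| := by
    calc (1:ℝ) ≤ (k:ℝ) := by exact_mod_cast hk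
    _ = ∑ _j : Fin k, (1:ℝ) := by simp
    _ ≤ ∑ j, |(a j : ℝ)| := by
        apply Finset.sum_le_sum
        intro j _
        have h1 : (1:ℤ) ≤ |a j| := Int.one_le_abs (ha j)
        calc (1:ℝ) ≤ ((|a j| : ℤ) : ℝ) := by exact_mod_cast h1
        _ = |(a j : ℝ)| := by push_cast; ring
  have hε4 : ε ≤ 1 / 4 := by
    have hSpos : (0:ℝ) < 4 * ∑ j, |(a j : ℝ)| := by linarith
    calc ε ≤ 1 / (4 * ∑ j, |(a j : ℝ)|) := hε'
    _ ≤ 1 / 4 := by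
        apply one_div_le_one_div_of_le (by norm_num)
        linarith
  have hx1 := abs_le.mp h1
  have hx2 := abs_le.mp h2
  have hterm : (1:ℝ)/4 ≤ (1 - x (lo k i) - x (hi k i)) ^ 2 := by
    nlinarith [hx1.2, hx2.2, hε4]
  have hT : (1:ℝ)/4 ≤ ∑ j : Fin k, (1 - x (lo k j) - x (hi k j)) ^ 2 := by
    calc (1:ℝ)/4 ≤ (1 - x (lo k i) - x (hi k i)) ^ 2 := hterm
    _ ≤ ∑ j : Fin k, (1 - x (lo k j) - x (hi k j)) ^ 2 := by
        exact Finset.single_le_sum (f := fun j => (1 - x (lo k j) - x (hi k j)) ^ 2)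
          (fun j _ => sq_nonneg _) (Finset.mem_univ i)
  have hA : (0:ℝ) ≤ ((C : ℝ) - ∑ j : Fin k, (a j : ℝ) * x (lo k j)) ^ 2 := sq_nonneg _
  have hM : (0:ℝ) ≤ ∑ j : Fin (2 * k), min 1 (x j ^ 2 / ε ^ 2) := by
    apply Finset.sum_nonneg
    intro j _
    exact le_min (by norm_num) (div_nonneg (sq_nonneg _) (sq_nonneg _))
  have hkR : (1:ℝ) ≤ (k:ℝ) := by exact_mod_cast hk
  have hP0 : (0:ℝ) < P := by
    have : (0:ℝ) < 2 * k / ε ^ 2 := by positivity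
    linarith
  have hεsq : ε ^ 2 ≤ 1 / 16 := by nlinarith
  have hPbig : 8 * (k:ℝ) ≤ P * (1/4) := by
    rw [div_le_iff₀ (by positivity)] at hP
    nlinarith
  have hfl : P * (1/4) ≤ ffun k a C P ε x := by
    unfold ffun
    nlinarith [mul_le_mul_of_nonneg_left hT (le_of_lt hP0)]
  rw [ffun] at hx
  unfold ffun at hfl
  nlinarith
end

section
/- (Theorem 2, proof step.) Let k ≥ 1, let a₁, …, a_k and C be nonzero integers, 0 < ε ≤ 1/(4 Σᵢ |aᵢ|), P ≥ 2k/ε², and let f : ℝ^{2k} → ℝ be f(x) = (C - Σ_{i=1}^k aᵢ xᵢ)² + P · Σ_{i=1}^k (1 - xᵢ - x_{i+k})² + Σ_{i=1}^{2k} min(1, xᵢ²/ε²). If x ∈ ℝ^{2k} satisfies f(x) < k + 1/4, then for every i ∈ {1, …, k} exactly one of |xᵢ| and |x_{i+k}| exceeds ε, and consequently Σ_{i=1}^{2k} min(1, xᵢ²/ε²) ≥ k. -/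
open BigOperators Finset

lemma sum_split_lo_hi (k : ℕ) (g : Fin (2*k) → ℝ) :
    ∑ i, g i = ∑ i : Fin k, (g (lo k i) + g (hi k i)) := by
  rw [Finset.sum_add_distrib]
  have h2 : 2*k = k + k := two_mul k
  calc ∑ i, g i = ∑ j : Fin (k+k), g ((finCongr h2).symm j) :=
        ((finCongr h2).symm.sum_comp g).symm
    _ = ∑ i : Fin k, g ((finCongr h2).symm (Fin.castAdd k i))
        + ∑ i : Fin k, g ((finCongr h2).symm (Fin.natAdd k i)) := Fin.sum_univ_add _
    _ = ∑ i : Fin k, g (lo k i) + ∑ i : Fin k, g (hi k i) := by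
        congr 1 <;> refine Finset.sum_congr rfl fun i _ => ?_ <;> congr 1 <;>
          exact Fin.ext (by simp [lo, hi, Nat.add_comm])

/-- Theorem 2, proof step: if `f(x) < k + 1/4`, then for every `i` exactly one
of `|xᵢ|` and `|x_{i+k}|` exceeds `ε`, and consequently the regularization term
is at least `k`. -/
theorem exactly_one_large_coordinate_of_ffun_lt
    (k : ℕ) (hk : 1 ≤ k) (a : Fin k → ℤ) (C : ℤ)
    (ha : ∀ i, a i ≠ 0) (hC : C ≠ 0) (ε P : ℝ)
    (hε : 0 < ε) (hε' : ε ≤ 1 / (4 * ∑ i, |(a i : ℝ)|)) (hP : 2 * k / ε ^ 2 ≤ P)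
    (x : Fin (2 * k) → ℝ) (hx : ffun k a C P ε x < k + 1 / 4) :
    (∀ i : Fin k, Xor' (ε < |x (lo k i)|) (ε < |x (hi k i)|))
      ∧ (k : ℝ) ≤ ∑ i : Fin (2 * k), min 1 (x i ^ 2 / ε ^ 2) := by
  have hεsq : (0:ℝ) < ε ^ 2 := by positivity
  have hk0 : (1:ℝ) ≤ (k:ℝ) := by exact_mod_cast hk
  -- Σ |aᵢ| ≥ 1
  have hsum_a : (1:ℝ) ≤ ∑ i, |(a i : ℝ)| := by
    have i0 : Fin k := ⟨0, hk⟩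
    have h1 : (1:ℤ) ≤ |a i0| := Int.one_le_abs (ha i0)
    have h1' : (1:ℝ) ≤ |(a i0 : ℝ)| := by exact_mod_cast h1
    exact h1'.trans (Finset.single_le_sum (f := fun i => |(a i : ℝ)|) (fun i _ => abs_nonneg _) (mem_univ i0))
  have hε4 : ε ≤ 1/4 :=
    hε'.trans (one_div_le_one_div_of_le (by norm_num) (by linarith))
  -- basic facts about the min terms
  set m : Fin (2*k) → ℝ := fun i => min 1 (x i ^ 2 / ε ^ 2) with hm
  have hm0 : ∀ i, 0 ≤ m i := fun i => le_min one_pos.le (by positivity)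
  have hm1 : ∀ i : Fin (2*k), ε < |x i| → m i = 1 := by
    intro i h
    apply min_eq_left
    rw [le_div_iff₀ hεsq, one_mul, ← sq_abs (x i)]
    exact pow_le_pow_left₀ hε.le h.le 2
  -- nonnegativity of the other two terms
  have hP0 : (0:ℝ) < P := lt_of_lt_of_le (div_pos (by linarith) hεsq) hP
  have hA : 0 ≤ ((C : ℝ) - ∑ i : Fin k, (a i : ℝ) * x (lo k i)) ^ 2 := sq_nonneg _
  have hB : 0 ≤ P * ∑ i : Fin k, (1 - x (lo k i) - x (hi k i)) ^ 2 :=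
    mul_nonneg hP0.le (Finset.sum_nonneg fun i _ => sq_nonneg _)
  unfold ffun at hx
  have hS : ∑ i, m i < k + 1/4 := by
    have := hx; simp only [← hm] at this ⊢; linarith
  have hS0 : (0:ℝ) ≤ ∑ i, m i := Finset.sum_nonneg fun i _ => hm0 i
  -- Step 1: at least one coordinate of each pair is large
  have hone : ∀ i : Fin k, ε < |x (lo k i)| ∨ ε < |x (hi k i)| := by
    intro i
    by_contra h
    push_neg at h
    obtain ⟨h1, h2⟩ := h
    have hl1 := (abs_le.mp h1).2
    have hh1 := (abs_le.mp h2).2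
    have hsq : (1/4 : ℝ) ≤ (1 - x (lo k i) - x (hi k i))^2 := by nlinarith
    have hsum : (1/4:ℝ) ≤ ∑ j : Fin k, (1 - x (lo k j) - x (hi k j))^2 :=
      hsq.trans (Finset.single_le_sum (f := fun j => (1 - x (lo k j) - x (hi k j))^2) (fun j _ => sq_nonneg _) (mem_univ i))
    have hεs : ε^2 ≤ 1/16 := by nlinarith
    have hPbig : (8:ℝ)*k ≤ P * ∑ j : Fin k, (1 - x (lo k j) - x (hi k j))^2 := by
      have h1 : 2*(k:ℝ)/ε^2 * (1/4) ≤ P * ∑ j : Fin k, (1 - x (lo k j) - x (hi k j))^2 :=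
        mul_le_mul hP hsum (by norm_num) hP0.le
      have h2 : (8:ℝ)*k ≤ 2*(k:ℝ)/ε^2 * (1/4) := by
        rw [div_mul_eq_mul_div, le_div_iff₀ hεsq]
        nlinarith
      linarith
    linarith
  -- Step 2: not both coordinates of a pair are large
  have hnotboth : ∀ i : Fin k, ¬(ε < |x (lo k i)| ∧ ε < |x (hi k i)|) := by
    intro i0 ⟨hb1, hb2⟩
    have hpair : ∀ i : Fin k, (1:ℝ) + (if i = i0 then 1 else 0) ≤ m (lo k i) + m (hi k i) := by
      intro i
      by_cases hii : i = i0
      · subst hii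
        rw [hm1 _ hb1, hm1 _ hb2]
        simp
      · simp only [hii, if_false, add_zero]
        rcases hone i with h | h
        · rw [hm1 _ h]; linarith [hm0 (hi k i)]
        · rw [hm1 _ h]; linarith [hm0 (lo k i)]
    have hsum : (k:ℝ) + 1 ≤ ∑ i, m i := by
      rw [sum_split_lo_hi]
      calc (k:ℝ) + 1 = ∑ i : Fin k, ((1:ℝ) + (if i = i0 then 1 else 0)) := by
            rw [Finset.sum_add_distrib, Finset.sum_ite_eq' univ i0 (fun _ => (1:ℝ))]
            simp
        _ ≤ _ := Finset.sum_le_sum fun i _ => hpair i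
    linarith
  -- combine into Xor'
  have hxor : ∀ i : Fin k, Xor' (ε < |x (lo k i)|) (ε < |x (hi k i)|) := by
    intro i
    rcases hone i with h | h
    · exact Or.inl ⟨h, fun h' => hnotboth i ⟨h, h'⟩⟩
    · exact Or.inr ⟨h, fun h' => hnotboth i ⟨h', h⟩⟩
  refine ⟨hxor, ?_⟩
  have hpair1 : ∀ i : Fin k, (1:ℝ) ≤ m (lo k i) + m (hi k i) := by
    intro i
    rcases hone i with h | h
    · rw [hm1 _ h]; linarith [hm0 (hi k i)]
    · rw [hm1 _ h]; linarith [hm0 (lo k i)]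
  calc (k:ℝ) = ∑ _i : Fin k, (1:ℝ) := by simp
    _ ≤ ∑ i : Fin k, (m (lo k i) + m (hi k i)) := Finset.sum_le_sum fun i _ => hpair1 i
    _ = ∑ i, m i := (sum_split_lo_hi k m).symm
end

section
/- (Theorem 2, proof step.) Let k ≥ 1, let a₁, …, a_k and C be nonzero integers, 0 < ε ≤ 1/(4 Σᵢ |aᵢ|), P ≥ 2k/ε², and let f : ℝ^{2k} → ℝ be f(x) = (C - Σ_{i=1}^k aᵢ xᵢ)² + P · Σ_{i=1}^k (1 - xᵢ - x_{i+k})² + Σ_{i=1}^{2k} min(1, xᵢ²/ε²). If x ∈ ℝ^{2k} satisfies f(x) < k + 1/4, then every coordinate xᵢ (1 ≤ i ≤ 2k) lies within distance 2ε of either 0 or 1, i.e., min(|xᵢ|, |xᵢ - 1|) ≤ 2ε. -/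
open BigOperators Finset

lemma sum_split (k : ℕ) (g : Fin (2 * k) → ℝ) :
    ∑ i, g i = ∑ j : Fin k, (g (lo k j) + g (hi k j)) := by
  have h : 2 * k = k + k := two_mul k
  have e := Fintype.sum_equiv (finCongr h.symm)
    (fun i : Fin (k + k) => g (finCongr h.symm i)) g (fun i => rfl)
  rw [← e, Fin.sum_univ_add, Finset.sum_add_distrib]
  congr 1
  exact Finset.sum_congr rfl fun j _ => congrArg g (Fin.ext (Nat.add_comm k j.1))

/-- Theorem 2, proof step: if `f(x) < k + 1/4`, then every coordinate of `x`
lies within distance `2ε` of either `0` or `1`. -/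
theorem coordinates_near_zero_or_one_of_ffun_lt
    (k : ℕ) (hk : 1 ≤ k) (a : Fin k → ℤ) (C : ℤ)
    (ha : ∀ i, a i ≠ 0) (hC : C ≠ 0) (ε P : ℝ)
    (hε : 0 < ε) (hε' : ε ≤ 1 / (4 * ∑ i, |(a i : ℝ)|)) (hP : 2 * k / ε ^ 2 ≤ P)
    (x : Fin (2 * k) → ℝ) (hx : ffun k a C P ε x < k + 1 / 4) :
    ∀ i : Fin (2 * k), min |x i| |x i - 1| ≤ 2 * ε := by
  have hε2 : (0:ℝ) < ε ^ 2 := by positivity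
  have hk1 : (1:ℝ) ≤ (k:ℝ) := by exact_mod_cast hk
  have hPpos : 0 < P := lt_of_lt_of_le (by positivity) hP
  have hPe : 2 * (k:ℝ) ≤ P * ε ^ 2 := by
    rw [div_le_iff₀ hε2] at hP; linarith
  have hsq : 0 ≤ ((C:ℝ) - ∑ i : Fin k, (a i : ℝ) * x (lo k i)) ^ 2 := sq_nonneg _
  have hsum2 : 0 ≤ ∑ j : Fin k, (1 - x (lo k j) - x (hi k j)) ^ 2 :=
    Finset.sum_nonneg fun _ _ => sq_nonneg _
  have hgnn : ∀ m : Fin (2*k), (0:ℝ) ≤ min 1 (x m ^ 2 / ε ^ 2) :=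
    fun m => le_min zero_le_one (by positivity)
  have hgsumnn : (0:ℝ) ≤ ∑ m : Fin (2*k), min 1 (x m ^ 2 / ε ^ 2) :=
    Finset.sum_nonneg fun m _ => hgnn m
  unfold ffun at hx
  -- each pair sum is close to 1
  have habs : ∀ j : Fin k, |1 - x (lo k j) - x (hi k j)| ≤ ε := by
    intro j
    have h1 : (1 - x (lo k j) - x (hi k j)) ^ 2 ≤
        ∑ j : Fin k, (1 - x (lo k j) - x (hi k j)) ^ 2 :=
      Finset.single_le_sum (f := fun j : Fin k => (1 - x (lo k j) - x (hi k j)) ^ 2)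
        (fun j _ => sq_nonneg _) (Finset.mem_univ j)
    have h2 : P * (1 - x (lo k j) - x (hi k j)) ^ 2 < (k:ℝ) + 1/4 := by
      have := mul_le_mul_of_nonneg_left h1 hPpos.le
      linarith
    by_contra hcon
    push_neg at hcon
    have hsq' : ε ^ 2 ≤ (1 - x (lo k j) - x (hi k j)) ^ 2 := by
      have := abs_nonneg (1 - x (lo k j) - x (hi k j))
      nlinarith [sq_abs (1 - x (lo k j) - x (hi k j))]
    have := mul_le_mul_of_nonneg_left hsq' hPpos.le
    linarith
  -- ε ≤ 1/4
  have hε4 : ε ≤ 1/4 := by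
    have h0 : (1:ℝ) ≤ |(a ⟨0, hk⟩ : ℝ)| := by
      rw [← Int.cast_abs]
      exact_mod_cast Int.one_le_abs (ha ⟨0, hk⟩)
    have hsa : (1:ℝ) ≤ ∑ i, |(a i : ℝ)| :=
      le_trans h0 (Finset.single_le_sum (f := fun i : Fin k => |(a i : ℝ)|)
        (fun i _ => abs_nonneg _) (Finset.mem_univ _))
    calc ε ≤ 1 / (4 * ∑ i, |(a i : ℝ)|) := hε'
      _ ≤ 1/4 := by
        apply div_le_div_of_nonneg_left (by norm_num) (by norm_num) -- maybe wrong
        linarith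
  -- if a coordinate is at least ε in abs, its min term is 1
  have hone : ∀ m : Fin (2*k), ε ≤ |x m| → min 1 (x m ^ 2 / ε ^ 2) = 1 := by
    intro m hm
    have h1 : (1:ℝ) ≤ x m ^ 2 / ε ^ 2 := by
      rw [le_div_iff₀ hε2]
      nlinarith [sq_abs (x m)]
    exact min_eq_left h1
  -- each pair contributes at least 1
  have hpairmin : ∀ j : Fin k,
      1 ≤ min 1 (x (lo k j) ^ 2 / ε ^ 2) + min 1 (x (hi k j) ^ 2 / ε ^ 2) := by
    intro j
    have h := abs_le.mp (habs j)
    rcases le_total (x (lo k j)) (x (hi k j)) with hle | hle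
    · have : ε ≤ |x (hi k j)| := by
        rw [le_abs]; left; linarith
      rw [hone _ this]
      linarith [hgnn (lo k j)]
    · have : ε ≤ |x (lo k j)| := by
        rw [le_abs]; left; linarith
      rw [hone _ this]
      linarith [hgnn (hi k j)]
  -- main: for each pair, not both coords ≥ ε
  have hnotboth : ∀ j : Fin k, ¬ (ε ≤ |x (lo k j)| ∧ ε ≤ |x (hi k j)|) := by
    intro j0 ⟨h1, h2⟩
    have hsplit := sum_split k (fun m => min 1 (x m ^ 2 / ε ^ 2))
    have hbig : (k:ℝ) + 1 ≤
        ∑ j : Fin k, (min 1 (x (lo k j) ^ 2 / ε ^ 2) + min 1 (x (hi k j) ^ 2 / ε ^ 2)) := by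
      have hle : ∀ j ∈ Finset.univ, (1 + if j = j0 then (1:ℝ) else 0) ≤
          min 1 (x (lo k j) ^ 2 / ε ^ 2) + min 1 (x (hi k j) ^ 2 / ε ^ 2) := by
        intro j _
        by_cases hj : j = j0
        · subst hj
          rw [hone _ h1, hone _ h2]
          simp
        · simp only [hj, if_false, add_zero]
          exact hpairmin j
      have := Finset.sum_le_sum hle
      rw [Finset.sum_add_distrib, Finset.sum_ite_eq' Finset.univ j0 (fun _ => (1:ℝ))] at this
      simpa using this
    have hlt : ∑ m : Fin (2*k), min 1 (x m ^ 2 / ε ^ 2) < (k:ℝ) + 1/4 := by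
      linarith [mul_nonneg hPpos.le hsum2]
    rw [hsplit] at hlt
    linarith
  -- conclude
  intro i
  by_cases hi2 : |x i| ≤ 2 * ε
  · exact min_le_of_left_le hi2
  push_neg at hi2
  have hiε : ε ≤ |x i| := by linarith
  have hik : i.1 < k ∨ (k ≤ i.1 ∧ i.1 < 2 * k) := by omega
  apply min_le_of_right_le
  rcases hik with hlt | ⟨hge, hlt2⟩
  · set j : Fin k := ⟨i.1, hlt⟩ with hj
    have hilo : i = lo k j := Fin.ext rfl
    have hpartner : |x (hi k j)| < ε := by
      by_contra hcon
      push_neg at hcon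
      exact hnotboth j ⟨hilo ▸ hiε, hcon⟩
    have h1 := abs_le.mp (habs j)
    have h2 := abs_lt.mp hpartner
    rw [hilo, abs_le]
    constructor <;> linarith
  · set j : Fin k := ⟨i.1 - k, by omega⟩ with hj
    have hihi : i = hi k j := Fin.ext (by simp [hi, hj]; omega)
    have hpartner : |x (lo k j)| < ε := by
      by_contra hcon
      push_neg at hcon
      exact hnotboth j ⟨hcon, hihi ▸ hiε⟩
    have h1 := abs_le.mp (habs j)
    have h2 := abs_lt.mp hpartner
    rw [hihi, abs_le]
    constructor <;> linarith
end

section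
/- (Theorem 2, rounding step.) Let k ≥ 1, let a₁, …, a_k and C be nonzero integers with 0 < ε ≤ 1/(4 Σᵢ |aᵢ|), and suppose that no subset S ⊆ {1, …, k} satisfies Σ_{i∈S} aᵢ = C. If x₁, …, x_k ∈ ℝ each satisfy min(|xᵢ|, |xᵢ - 1|) ≤ 2ε, then (C - Σ_{i=1}^k aᵢ xᵢ)² ≥ 1/4. -/
open BigOperators Finset

/-!
Round each `xᵢ` to the nearer of `0` and `1`, i.e. to the indicator of
`S = {i | |xᵢ - 1| ≤ |xᵢ|}`. Each `aᵢ xᵢ` moves by at most `2ε |aᵢ|`, so the integer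
`Σ_{i∈S} aᵢ` lies within `2ε Σ |aᵢ| ≤ 1/2` of `Σ aᵢ xᵢ`. Since it differs from `C` by at
least `1`, `Σ aᵢ xᵢ` stays at distance at least `1/2` from `C`.
-/

lemma abs_nearest_bit_sub (x : ℝ) :
    |(if |x - 1| ≤ |x| then 1 else 0) - x| = min |x| |x - 1| := by
  split_ifs with h
  · rw [min_eq_right h, abs_sub_comm]
  · rw [min_eq_left (not_le.1 h).le, zero_sub, abs_neg]

lemma abs_sum_mul_sub_sum_mul_le {ι : Type*} (s : Finset ι) (w y x : ι → ℝ) {δ : ℝ}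
    (h : ∀ i ∈ s, |y i - x i| ≤ δ) :
    |∑ i ∈ s, w i * y i - ∑ i ∈ s, w i * x i| ≤ (∑ i ∈ s, |w i|) * δ := by
  rw [← sum_sub_distrib, sum_mul]
  refine (abs_sum_le_sum_abs _ _).trans (sum_le_sum fun i hi => ?_)
  rw [← mul_sub, abs_mul]
  exact mul_le_mul_of_nonneg_left (h i hi) (abs_nonneg _)

lemma mul_le_one_div_of_le_one_div_mul {c s t : ℝ} (hc : 0 ≤ c) (hs : 0 ≤ s)
    (ht : t ≤ 1 / (c * s)) : s * t ≤ 1 / c := by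
  rcases hs.eq_or_lt with rfl | hs
  · simpa using hc
  calc s * t ≤ s * (1 / (c * s)) := mul_le_mul_of_nonneg_left ht hs.le
    _ = 1 / c := by rw [mul_one_div, mul_comm c, div_mul_cancel_left₀ hs.ne', one_div]

lemma half_le_abs_intCast_sub {m n : ℤ} (hne : m ≠ n) {y : ℝ} (hy : |(n : ℝ) - y| ≤ 1 / 2) :
    1 / 2 ≤ |(m : ℝ) - y| := by
  have hmn : (1 : ℝ) ≤ |(m : ℝ) - n| := by
    exact_mod_cast Int.one_le_abs (sub_ne_zero.2 hne)
  linarith [abs_sub_le (m : ℝ) y n, abs_sub_comm y (n : ℝ)]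

theorem rounding_step_general
    (k : ℕ) (a : Fin k → ℤ) (C : ℤ) (ε : ℝ)
    (hε' : ε ≤ 1 / (4 * ∑ i, |(a i : ℝ)|))
    (hno : ¬ ∃ S : Finset (Fin k), ∑ i ∈ S, a i = C)
    (x : Fin k → ℝ) (hx : ∀ i, min |x i| |x i - 1| ≤ 2 * ε) :
    1 / 4 ≤ ((C : ℝ) - ∑ i, (a i : ℝ) * x i) ^ 2 := by
  set S := univ.filter fun i => |x i - 1| ≤ |x i|
  have hS : ((∑ i ∈ S, a i : ℤ) : ℝ) =
      ∑ i, (a i : ℝ) * if |x i - 1| ≤ |x i| then 1 else 0 := by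
    simp [S, sum_filter]
  have hround : |((∑ i ∈ S, a i : ℤ) : ℝ) - ∑ i, (a i : ℝ) * x i| ≤ 1 / 2 := by
    rw [hS]
    calc _ ≤ (∑ i, |(a i : ℝ)|) * (2 * ε) := abs_sum_mul_sub_sum_mul_le _ _ _ _
            fun i _ => (abs_nearest_bit_sub (x i)).trans_le (hx i)
      _ = 2 * ((∑ i, |(a i : ℝ)|) * ε) := by ring
      _ ≤ 2 * (1 / 4) := by
        gcongr
        exact mul_le_one_div_of_le_one_div_mul (by norm_num)
          (sum_nonneg fun i _ => abs_nonneg _) hε'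
      _ = 1 / 2 := by norm_num
  have hgap := half_le_abs_intCast_sub (fun h => hno ⟨S, h.symm⟩) hround
  nlinarith [sq_abs ((C : ℝ) - ∑ i, (a i : ℝ) * x i)]

/-- Theorem 2, rounding step: if no subset `S ⊆ {1, …, k}` satisfies
`Σ_{i∈S} aᵢ = C`, and each `xᵢ` is within `2ε` of `0` or `1`, then
`(C - Σᵢ aᵢ xᵢ)² ≥ 1/4`. -/
theorem rounding_step
    (k : ℕ) (hk : 1 ≤ k) (a : Fin k → ℤ) (C : ℤ)
    (ha : ∀ i, a i ≠ 0) (hC : C ≠ 0) (ε : ℝ)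
    (hε : 0 < ε) (hε' : ε ≤ 1 / (4 * ∑ i, |(a i : ℝ)|))
    (hno : ¬ ∃ S : Finset (Fin k), ∑ i ∈ S, a i = C)
    (x : Fin k → ℝ) (hx : ∀ i, min |x i| |x i - 1| ≤ 2 * ε) :
    1 / 4 ≤ ((C : ℝ) - ∑ i, (a i : ℝ) * x i) ^ 2 :=
  rounding_step_general k a C ε hε' hno x hx
end

section
/- (Theorem 2, backward direction.) Let k ≥ 1, let a₁, …, a_k and C be nonzero integers, 0 < ε ≤ 1/(4 Σᵢ |aᵢ|), P ≥ 2k/ε², and let f : ℝ^{2k} → ℝ be f(x) = (C - Σ_{i=1}^k aᵢ xᵢ)² + P · Σ_{i=1}^k (1 - xᵢ - x_{i+k})² + Σ_{i=1}^{2k} min(1, xᵢ²/ε²). If no subset S ⊆ {1, …, k} satisfies Σ_{i∈S} aᵢ = C, then f(x) ≥ k + 1/4 for every x ∈ ℝ^{2k}. -/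
open BigOperators Finset

/-!
Write the objective as `(C - Σ aᵢ xᵢ)² + Σᵢ gᵢ` with `gᵢ = pairCost P ε xᵢ x_{i+k}`, the coupling
penalty of the pair `(xᵢ, x_{i+k})` plus the two truncated quadratics of its coordinates. Each `gᵢ`
is at least `1`: if both coordinates are below `ε` the penalty alone is large, otherwise one
truncation is saturated. So `f(x) < k + 1/4` forces `|C - Σ aᵢ xᵢ| < 1/2` and every `gᵢ < 5/4`; the
latter means that exactly one coordinate of each pair is saturated and the pair nearly sums to `1`,
so `xᵢ` lies within `2ε` of the indicator of `S = {i | |xᵢ| ≥ ε}`. As `2ε Σ |aᵢ| ≤ 1/2`, the integer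
`C - Σ_{i∈S} aᵢ` has absolute value below `1`, so `S` is good.
-/

lemma sum_fin_two_mul {M : Type*} [AddCommMonoid M] {k : ℕ} (g : Fin (2 * k) → M) :
    ∑ i, g i = ∑ i : Fin k, g (lo k i) + ∑ i : Fin k, g (hi k i) := by
  rw [← (finCongr (two_mul k).symm).sum_comp, Fin.sum_univ_add]
  congr 1
  exact sum_congr rfl fun i _ => congrArg g (Fin.ext (by simp [hi]))

lemma min_one_sq_div_sq_eq_one {ε t : ℝ} (hε : 0 < ε) (ht : ε ≤ |t|) :
    min 1 (t ^ 2 / ε ^ 2) = 1 := by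
  refine min_eq_left ?_
  rw [one_le_div (by positivity), ← sq_abs t]
  gcongr

lemma min_one_sq_div_sq_nonneg (ε t : ℝ) : 0 ≤ min 1 (t ^ 2 / ε ^ 2) :=
  le_min zero_le_one (by positivity)

noncomputable def pairCost (P ε u v : ℝ) : ℝ :=
  P * (1 - u - v) ^ 2 + min 1 (u ^ 2 / ε ^ 2) + min 1 (v ^ 2 / ε ^ 2)

lemma ffun_eq_sq_add_sum_pairCost (k : ℕ) (a : Fin k → ℤ) (C : ℤ) (P ε : ℝ)
    (x : Fin (2 * k) → ℝ) :
    ffun k a C P ε x = ((C : ℝ) - ∑ i, (a i : ℝ) * x (lo k i)) ^ 2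
      + ∑ i, pairCost P ε (x (lo k i)) (x (hi k i)) := by
  simp only [ffun, pairCost, sum_fin_two_mul fun i => min 1 (x i ^ 2 / ε ^ 2), sum_add_distrib,
    mul_sum]
  ring

section pairCost

variable {P ε u v : ℝ}

lemma two_le_pairCost_of_le_abs (hε : 0 < ε) (hP : 0 ≤ P) (hu : ε ≤ |u|) (hv : ε ≤ |v|) :
    2 ≤ pairCost P ε u v := by
  rw [pairCost, min_one_sq_div_sq_eq_one hε hu, min_one_sq_div_sq_eq_one hε hv]
  nlinarith [sq_nonneg (1 - u - v)]

lemma two_le_pairCost_of_abs_lt (hε : ε ≤ 1 / 4) (hPε : 1 ≤ P * ε ^ 2) (hu : |u| < ε)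
    (hv : |v| < ε) : 2 ≤ pairCost P ε u v := by
  obtain ⟨hu₁, hu₂⟩ := abs_lt.mp hu
  obtain ⟨hv₁, hv₂⟩ := abs_lt.mp hv
  have hgap : 1 / 4 ≤ (1 - u - v) ^ 2 := by nlinarith
  have hε2 : ε ^ 2 ≤ 1 / 16 := by nlinarith
  have hP₀ : 0 < P := by nlinarith [sq_nonneg ε]
  have hP : 16 ≤ P := by nlinarith [mul_le_mul_of_nonneg_left hε2 hP₀.le]
  have := min_one_sq_div_sq_nonneg ε u
  have := min_one_sq_div_sq_nonneg ε v
  rw [pairCost]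
  nlinarith

lemma one_le_pairCost (hε : 0 < ε) (hε4 : ε ≤ 1 / 4) (hPε : 1 ≤ P * ε ^ 2) :
    1 ≤ pairCost P ε u v := by
  have hP : 0 ≤ P := by nlinarith
  have hpen : 0 ≤ P * (1 - u - v) ^ 2 := by positivity
  have := min_one_sq_div_sq_nonneg ε u
  have := min_one_sq_div_sq_nonneg ε v
  by_cases hu : ε ≤ |u|
  · rw [pairCost, min_one_sq_div_sq_eq_one hε hu]; linarith
  by_cases hv : ε ≤ |v|
  · rw [pairCost, min_one_sq_div_sq_eq_one hε hv]; linarith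
  linarith [two_le_pairCost_of_abs_lt hε4 hPε (not_le.mp hu) (not_le.mp hv)]

lemma abs_lt_or_abs_sub_one_lt_of_pairCost_lt (hε : 0 < ε) (hε4 : ε ≤ 1 / 4)
    (hPε : 1 ≤ P * ε ^ 2) (hcost : pairCost P ε u v < 5 / 4) : |u| < ε ∨ |u - 1| < 2 * ε := by
  refine or_iff_not_imp_left.mpr fun hu => ?_
  have hP : 0 < P := by nlinarith
  have hu : ε ≤ |u| := not_lt.mp hu
  have hv : |v| < ε := by
    by_contra! hv
    linarith [two_le_pairCost_of_le_abs hε hP.le hu hv]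
  have hpen : P * (1 - u - v) ^ 2 < 1 / 4 := by
    rw [pairCost, min_one_sq_div_sq_eq_one hε hu] at hcost
    linarith [min_one_sq_div_sq_nonneg ε v]
  have hd : |1 - u - v| < ε / 2 := by
    refine abs_lt_of_sq_lt_sq ?_ (by positivity)
    nlinarith
  calc |u - 1| = |-(1 - u - v) + -v| := by ring_nf
    _ ≤ |1 - u - v| + |v| := by simpa only [abs_neg] using abs_add_le (-(1 - u - v)) (-v)
    _ < 2 * ε := by linarith

end pairCost

lemma sum_eq_of_abs_sub_indicator_le {ι : Type*} [Fintype ι] [DecidableEq ι] (a : ι → ℤ) (C : ℤ)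
    (x : ι → ℝ) (S : Finset ι) {δ : ℝ} (hC : |(C : ℝ) - ∑ i, (a i : ℝ) * x i| < 1 / 2)
    (hx : ∀ i, |x i - if i ∈ S then 1 else 0| ≤ δ) (hδ : (∑ i, |(a i : ℝ)|) * δ ≤ 1 / 2) :
    ∑ i ∈ S, a i = C := by
  have hS : ((∑ i ∈ S, a i : ℤ) : ℝ) = ∑ i, (a i : ℝ) * if i ∈ S then 1 else 0 := by
    simp [mul_ite, sum_ite_mem]
  have hround : |∑ i, (a i : ℝ) * x i - ∑ i ∈ S, (a i : ℝ)| ≤ 1 / 2 := by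
    calc |∑ i, (a i : ℝ) * x i - ∑ i ∈ S, (a i : ℝ)|
        = |∑ i, (a i : ℝ) * (x i - if i ∈ S then 1 else 0)| := by
          rw [← Int.cast_sum, hS, ← sum_sub_distrib]; simp only [mul_sub]
      _ ≤ ∑ i, |(a i : ℝ)| * δ := by
          refine (abs_sum_le_sum_abs _ _).trans (sum_le_sum fun i _ => ?_)
          rw [abs_mul]
          exact mul_le_mul_of_nonneg_left (hx i) (abs_nonneg _)
      _ ≤ 1 / 2 := by rwa [← sum_mul]
  have hlt : |((C - ∑ i ∈ S, a i : ℤ) : ℝ)| < 1 := by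
    push_cast
    linarith [abs_sub_le (C : ℝ) (∑ i, (a i : ℝ) * x i) (∑ i ∈ S, (a i : ℝ))]
  rw [← Int.cast_abs, ← Int.cast_one, Int.cast_lt, Int.abs_lt_one_iff] at hlt
  omega

lemma card_add_le_sum_of_one_le {ι : Type*} [Fintype ι] {g : ι → ℝ} (hg : ∀ i, 1 ≤ g i)
    (i₀ : ι) : Fintype.card ι + (g i₀ - 1) ≤ ∑ i, g i := by
  have h : g i₀ - 1 ≤ ∑ i, (g i - 1) :=
    single_le_sum (f := fun i => g i - 1) (fun i _ => sub_nonneg.mpr (hg i)) (mem_univ i₀)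
  rw [sum_sub_distrib] at h
  simp only [sum_const, card_univ, nsmul_eq_mul, mul_one] at h
  linarith

theorem ffun_ge_of_no_goodSubset_general
    (k : ℕ) (hk : 1 ≤ k) (a : Fin k → ℤ) (C : ℤ)
    (ha : ∀ i, a i ≠ 0) (ε P : ℝ)
    (hε : 0 < ε) (hε' : ε ≤ 1 / (4 * ∑ i, |(a i : ℝ)|)) (hP : 2 * k / ε ^ 2 ≤ P)
    (hno : ¬ ∃ S : Finset (Fin k), ∑ i ∈ S, a i = C) :
    ∀ x : Fin (2 * k) → ℝ, (k : ℝ) + 1 / 4 ≤ ffun k a C P ε x := by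
  intro x
  have hkA : (k : ℝ) ≤ ∑ i, |(a i : ℝ)| := by
    simpa using card_nsmul_le_sum univ (fun i => |(a i : ℝ)|) 1
      fun i _ => by exact_mod_cast Int.one_le_abs (ha i)
  have hk1 : (1 : ℝ) ≤ k := by exact_mod_cast hk
  have hAε : 4 * (∑ i, |(a i : ℝ)|) * ε ≤ 1 := by
    rwa [le_div_iff₀ (by linarith), mul_comm] at hε'
  have hε4 : ε ≤ 1 / 4 := by nlinarith
  have hPε : 1 ≤ P * ε ^ 2 := by
    rw [div_le_iff₀ (by positivity)] at hP; linarith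
  have hpair i := one_le_pairCost (u := x (lo k i)) (v := x (hi k i)) hε hε4 hPε
  have hsum i := by simpa using card_add_le_sum_of_one_le hpair i
  rw [ffun_eq_sq_add_sum_pairCost]
  by_cases hQ : 1 / 4 ≤ ((C : ℝ) - ∑ i, (a i : ℝ) * x (lo k i)) ^ 2
  · linarith [hsum ⟨0, hk⟩, hpair ⟨0, hk⟩]
  by_cases hbig : ∃ i, 5 / 4 ≤ pairCost P ε (x (lo k i)) (x (hi k i))
  · obtain ⟨i, hcost⟩ := hbig
    nlinarith [hsum i]
  push Not at hQ hbig
  refine absurd ⟨univ.filter fun i => ¬ |x (lo k i)| < ε, ?_⟩ hno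
  refine sum_eq_of_abs_sub_indicator_le a C (fun i => x (lo k i)) _
    (abs_lt_of_sq_lt_sq (by linarith) (by norm_num)) (δ := 2 * ε) (fun i => ?_) (by linarith)
  by_cases hsmall : |x (lo k i)| < ε
  · simp only [mem_filter, mem_univ, hsmall, not_true_eq_false, and_false, if_false, sub_zero]
    linarith
  · simp only [mem_filter, mem_univ, hsmall, not_false_eq_true, and_true, if_true]
    exact ((abs_lt_or_abs_sub_one_lt_of_pairCost_lt hε hε4 hPε (hbig i)).resolve_left hsmall).le

/-- Theorem 2, backward direction: if no subset `S ⊆ {1, …, k}` satisfies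
`Σ_{i∈S} aᵢ = C`, then `f(x) ≥ k + 1/4` for every `x`. -/
theorem ffun_ge_of_no_goodSubset
    (k : ℕ) (hk : 1 ≤ k) (a : Fin k → ℤ) (C : ℤ)
    (ha : ∀ i, a i ≠ 0) (hC : C ≠ 0) (ε P : ℝ)
    (hε : 0 < ε) (hε' : ε ≤ 1 / (4 * ∑ i, |(a i : ℝ)|)) (hP : 2 * k / ε ^ 2 ≤ P)
    (hno : ¬ ∃ S : Finset (Fin k), ∑ i ∈ S, a i = C) :
    ∀ x : Fin (2 * k) → ℝ, (k : ℝ) + 1 / 4 ≤ ffun k a C P ε x :=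
  ffun_ge_of_no_goodSubset_general k hk a C ha ε P hε hε' hP hno
end

section
/- (Theorem 2, gap property.) Let k ≥ 1, let a₁, …, a_k and C be nonzero integers, 0 < ε ≤ 1/(4 Σᵢ |aᵢ|), P ≥ 2k/ε², and let f : ℝ^{2k} → ℝ be f(x) = (C - Σ_{i=1}^k aᵢ xᵢ)² + P · Σ_{i=1}^k (1 - xᵢ - x_{i+k})² + Σ_{i=1}^{2k} min(1, xᵢ²/ε²). Then the infimum of f over ℝ^{2k} is never strictly between k and k + 1/4: either inf f ≤ k or inf f ≥ k + 1/4. -/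
open BigOperators Finset

set_option maxHeartbeats 1000000

lemma pair_sum (k : ℕ) (g : Fin (2 * k) → ℝ) :
    ∑ j : Fin (2 * k), g j = ∑ i : Fin k, (g (lo k i) + g (hi k i)) := by
  rw [Finset.sum_add_distrib]
  calc ∑ j : Fin (2 * k), g j
      = ∑ s : Fin k ⊕ Fin k, g ((finSumFinEquiv.trans (finCongr (two_mul k).symm)) s) :=
        (Equiv.sum_comp _ g).symm
    _ = (∑ i : Fin k, g ((finSumFinEquiv.trans (finCongr (two_mul k).symm)) (.inl i)))
        + ∑ i : Fin k, g ((finSumFinEquiv.trans (finCongr (two_mul k).symm)) (.inr i)) :=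
        Fintype.sum_sum_type _
    _ = (∑ i : Fin k, g (lo k i)) + ∑ i : Fin k, g (hi k i) := by
        congr 1 <;> refine Finset.sum_congr rfl fun i _ => ?_ <;> congr 1 <;>
          · apply Fin.ext; simp [lo, hi, Nat.add_comm]

/-- Theorem 2, gap property: the infimum of `f` is never strictly between `k`
and `k + 1/4`. -/
theorem ffun_inf_gap
    (k : ℕ) (hk : 1 ≤ k) (a : Fin k → ℤ) (C : ℤ)
    (ha : ∀ i, a i ≠ 0) (hC : C ≠ 0) (ε P : ℝ)
    (hε : 0 < ε) (hε' : ε ≤ 1 / (4 * ∑ i, |(a i : ℝ)|)) (hP : 2 * k / ε ^ 2 ≤ P) :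
    sInf (Set.range (ffun k a C P ε)) ≤ k
      ∨ (k : ℝ) + 1 / 4 ≤ sInf (Set.range (ffun k a C P ε)) := by
  rcases le_or_gt ((k:ℝ) + 1/4) (sInf (Set.range (ffun k a C P ε))) with h | h
  · exact Or.inr h
  left
  -- basic constants
  set A : ℝ := ∑ i, |(a i : ℝ)| with hA
  have hk1 : (1:ℝ) ≤ (k:ℝ) := by exact_mod_cast hk
  have hA1 : (k:ℝ) ≤ A := by
    rw [hA]
    calc (k:ℝ) = ∑ _i : Fin k, (1:ℝ) := by simp
      _ ≤ ∑ i, |(a i : ℝ)| := Finset.sum_le_sum fun i _ => by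
          have h1 : (1:ℤ) ≤ |a i| := Int.one_le_abs (ha i)
          have h2 : ((1:ℤ):ℝ) ≤ ((|a i| : ℤ) : ℝ) := by exact_mod_cast h1
          simpa using h2
  have hA0 : (1:ℝ) ≤ A := le_trans hk1 hA1
  have hεA : 4 * (ε * A) ≤ 1 := by
    have h4A : 0 < 4 * A := by linarith
    have h5 := (le_div_iff₀ h4A).mp hε'
    nlinarith
  have hε4 : ε ≤ 1/4 := by nlinarith
  have hε1 : ε ≤ 1 := by linarith
  have hP0 : 0 < P := lt_of_lt_of_le (by positivity) hP
  -- nonnegativity facts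
  have hmnn : ∀ t : ℝ, 0 ≤ min 1 (t ^ 2 / ε ^ 2) := fun t =>
    le_min zero_le_one (by positivity)
  have hnn : ∀ y, 0 ≤ ffun k a C P ε y := by
    intro y
    unfold ffun
    have h1 : 0 ≤ ((C : ℝ) - ∑ i : Fin k, (a i : ℝ) * y (lo k i)) ^ 2 := sq_nonneg _
    have h2 : 0 ≤ P * ∑ i : Fin k, (1 - y (lo k i) - y (hi k i)) ^ 2 := by positivity
    have h3 : 0 ≤ ∑ i : Fin (2*k), min 1 (y i ^ 2 / ε ^ 2) :=
      Finset.sum_nonneg fun i _ => hmnn _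
    linarith
  have hbdd : BddBelow (Set.range (ffun k a C P ε)) := by
    refine ⟨0, ?_⟩; rintro r ⟨y, rfl⟩; exact hnn y
  obtain ⟨r, hr, hrlt⟩ := exists_lt_of_csInf_lt (Set.range_nonempty _) h
  obtain ⟨x, rfl⟩ := hr
  -- notation
  set u : Fin k → ℝ := fun i => x (lo k i) with hu
  set v : Fin k → ℝ := fun i => x (hi k i) with hv
  have hfx : ((C : ℝ) - ∑ i, (a i : ℝ) * u i) ^ 2
      + P * ∑ i, (1 - u i - v i) ^ 2
      + ∑ i : Fin (2*k), min 1 (x i ^ 2 / ε ^ 2) < k + 1/4 := hrlt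
  have hT1nn : 0 ≤ ((C : ℝ) - ∑ i, (a i : ℝ) * u i) ^ 2 := sq_nonneg _
  have hT2nn : 0 ≤ P * ∑ i, (1 - u i - v i) ^ 2 := by positivity
  have hT3 : (∑ i : Fin (2*k), min 1 (x i ^ 2 / ε ^ 2))
      = ∑ i : Fin k, (min 1 (u i ^ 2 / ε ^ 2) + min 1 (v i ^ 2 / ε ^ 2)) :=
    pair_sum k _
  have hT3nn : 0 ≤ ∑ i : Fin (2*k), min 1 (x i ^ 2 / ε ^ 2) :=
    Finset.sum_nonneg fun i _ => hmnn _
  -- delta bound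
  have hδ : ∀ i, |1 - u i - v i| ≤ ε := by
    intro i
    have hsingle : (1 - u i - v i) ^ 2 ≤ ∑ j, (1 - u j - v j) ^ 2 :=
      Finset.single_le_sum (f := fun j => (1 - u j - v j) ^ 2)
        (fun j _ => sq_nonneg _) (Finset.mem_univ i)
    have h1 : P * (1 - u i - v i) ^ 2 < (k:ℝ) + 1/4 := by nlinarith
    have h2 : 2 * (k:ℝ) / ε ^ 2 * (1 - u i - v i) ^ 2 ≤ P * (1 - u i - v i) ^ 2 :=
      mul_le_mul_of_nonneg_right hP (sq_nonneg _)
    have hε2 : (0:ℝ) < ε ^ 2 := by positivity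
    have h3 : 2 * (k:ℝ) * (1 - u i - v i) ^ 2 ≤ P * (1 - u i - v i) ^ 2 * ε ^ 2 := by
      rw [div_mul_eq_mul_div, div_le_iff₀ hε2] at h2
      linarith
    have h4 : (1 - u i - v i) ^ 2 ≤ ε ^ 2 := by
      nlinarith [mul_lt_mul_of_pos_right h1 hε2, h3, hk1, hε2]
    rw [← Real.sqrt_sq hε.le, ← Real.sqrt_sq_eq_abs]
    exact Real.sqrt_le_sqrt h4
  -- at least one large in each pair
  have hor : ∀ i, ε ≤ |u i| ∨ ε ≤ |v i| := by
    intro i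
    by_contra hcon
    push_neg at hcon
    have h2 := abs_lt.mp hcon.1
    have h3 := abs_lt.mp hcon.2
    have h4 := abs_le.mp (hδ i)
    linarith [h4.1, h4.2, h2.1, h2.2, h3.1, h3.2]
  have hbig : ∀ w : ℝ, ε ≤ |w| → min 1 (w ^ 2 / ε ^ 2) = 1 := by
    intro w hw
    apply min_eq_left
    rw [one_le_div (by positivity : (0:ℝ) < ε ^ 2)]
    calc ε ^ 2 ≤ |w| ^ 2 := by nlinarith [abs_nonneg w]
      _ = w ^ 2 := sq_abs w
  have hpair1 : ∀ i, 1 ≤ min 1 (u i ^ 2 / ε ^ 2) + min 1 (v i ^ 2 / ε ^ 2) := by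
    intro i
    rcases hor i with hw | hw
    · rw [hbig _ hw]; linarith [hmnn (v i)]
    · rw [hbig _ hw]; linarith [hmnn (u i)]
  have hT3k : (k:ℝ) ≤ ∑ i : Fin (2*k), min 1 (x i ^ 2 / ε ^ 2) := by
    rw [hT3]
    calc (k:ℝ) = ∑ _i : Fin k, (1:ℝ) := by simp
      _ ≤ _ := Finset.sum_le_sum fun i _ => hpair1 i
  have hT1 : ((C : ℝ) - ∑ i, (a i : ℝ) * u i) ^ 2 < 1/4 := by linarith
  -- not both large
  have hnotboth : ∀ i, ¬ (ε ≤ |u i| ∧ ε ≤ |v i|) := by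
    intro i0 ⟨h1, h2⟩
    have hge : ∑ i : Fin k, ((1:ℝ) + if i = i0 then 1 else 0)
        ≤ ∑ i : Fin k, (min 1 (u i ^ 2 / ε ^ 2) + min 1 (v i ^ 2 / ε ^ 2)) := by
      apply Finset.sum_le_sum
      intro i _
      by_cases hii : i = i0
      · subst hii; rw [hbig _ h1, hbig _ h2]; simp
      · simp only [hii, if_false, add_zero]; exact hpair1 i
    have hsum : ∑ i : Fin k, ((1:ℝ) + if i = i0 then 1 else 0) = k + 1 := by
      rw [Finset.sum_add_distrib]
      simp
    rw [hsum] at hge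
    rw [hT3] at hfx
    linarith
  -- the rounded point
  classical
  set z : Fin (2*k) → ℝ := fun j =>
    if hj : j.1 < k then (if |x (hi k ⟨j.1, hj⟩)| < ε then 1 else 0)
    else (if |x (hi k ⟨j.1 - k, by omega⟩)| < ε then 0 else 1) with hz
  have hzlo : ∀ i : Fin k, z (lo k i) = if |v i| < ε then 1 else 0 := by
    intro i
    have h1 : (lo k i).1 < k := i.2
    rw [hz]
    simp only [dif_pos h1]
    have h2 : (⟨(lo k i).1, h1⟩ : Fin k) = i := by apply Fin.ext; rfl
    rw [h2, hv]
  have hzhi : ∀ i : Fin k, z (hi k i) = if |v i| < ε then 0 else 1 := by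
    intro i
    have h1 : ¬ (hi k i).1 < k := by simp [hi]
    rw [hz]
    simp only [dif_neg h1]
    have h2 : (⟨(hi k i).1 - k, by omega⟩ : Fin k) = i := by
      apply Fin.ext; simp [hi]
    rw [h2, hv]
  -- the integer
  set n : ℤ := C - ∑ i, if |v i| < ε then a i else 0 with hn
  have hncast : ((n:ℤ):ℝ) = (C:ℝ) - ∑ i, (a i : ℝ) * z (lo k i) := by
    rw [hn]
    push_cast
    congr 1
    apply Finset.sum_congr rfl
    intro i _
    rw [hzlo i]
    split <;> simp
  -- per-coordinate closeness
  have hclose : ∀ i, |u i - z (lo k i)| ≤ 2 * ε := by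
    intro i
    rw [hzlo i]
    by_cases hvi : |v i| < ε
    · rw [if_pos hvi]
      have h2 := abs_le.mp (hδ i)
      have h3 := abs_lt.mp hvi
      rw [abs_le]
      constructor <;> linarith [h2.1, h2.2, h3.1, h3.2]
    · rw [if_neg hvi]
      push_neg at hvi
      have h1 : ¬ ε ≤ |u i| := fun hcon => hnotboth i ⟨hcon, hvi⟩
      push_neg at h1
      have h2 := abs_lt.mp h1
      rw [sub_zero, abs_le]
      constructor <;> linarith [h2.1, h2.2]
  -- |C - Σ a z| < 1
  have hdiff : |(∑ i, (a i : ℝ) * u i) - ∑ i, (a i : ℝ) * z (lo k i)| ≤ 2 * ε * A := by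
    rw [← Finset.sum_sub_distrib]
    calc |∑ i, ((a i : ℝ) * u i - (a i : ℝ) * z (lo k i))|
        ≤ ∑ i, |(a i : ℝ) * u i - (a i : ℝ) * z (lo k i)| :=
          Finset.abs_sum_le_sum_abs _ _
      _ ≤ ∑ i, |(a i : ℝ)| * (2 * ε) := by
          apply Finset.sum_le_sum
          intro i _
          rw [← mul_sub, abs_mul]
          exact mul_le_mul_of_nonneg_left (hclose i) (abs_nonneg _)
      _ = 2 * ε * A := by rw [hA, ← Finset.sum_mul]; ring
  have hCx : |(C:ℝ) - ∑ i, (a i : ℝ) * u i| < 1/2 := by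
    nlinarith [abs_nonneg ((C:ℝ) - ∑ i, (a i : ℝ) * u i),
      sq_abs ((C:ℝ) - ∑ i, (a i : ℝ) * u i)]
  have habs : |((C:ℝ) - ∑ i, (a i : ℝ) * z (lo k i))| < 1 := by
    calc |((C:ℝ) - ∑ i, (a i : ℝ) * z (lo k i))|
        = |((C:ℝ) - ∑ i, (a i : ℝ) * u i)
            + ((∑ i, (a i : ℝ) * u i) - ∑ i, (a i : ℝ) * z (lo k i))| := by ring_nf
      _ ≤ |(C:ℝ) - ∑ i, (a i : ℝ) * u i|
            + |(∑ i, (a i : ℝ) * u i) - ∑ i, (a i : ℝ) * z (lo k i)| := abs_add_le _ _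
      _ < 1 := by linarith
  have hn0 : n = 0 := by
    have h1 : |(n:ℝ)| < 1 := by rw [hncast]; exact habs
    have h2 : |n| < 1 := by exact_mod_cast h1
    have h3 := abs_lt.mp h2
    omega
  -- value at z
  have hone : min (1:ℝ) (1 ^ 2 / ε ^ 2) = 1 := by
    apply min_eq_left
    rw [le_div_iff₀ (by positivity : (0:ℝ) < ε ^ 2)]
    nlinarith
  have hzero : min (1:ℝ) (0 ^ 2 / ε ^ 2) = 0 := by
    rw [min_eq_right] <;> simp [le_div_iff₀ (by positivity : (0:ℝ) < ε ^ 2)]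
  have hfz : ffun k a C P ε z = k := by
    unfold ffun
    have h1 : (C:ℝ) - ∑ i, (a i : ℝ) * z (lo k i) = 0 := by
      rw [← hncast, hn0]; simp
    have h2 : ∑ i : Fin k, (1 - z (lo k i) - z (hi k i)) ^ 2 = 0 := by
      apply Finset.sum_eq_zero
      intro i _
      rw [hzlo i, hzhi i]
      split_ifs <;> ring
    have h3 : ∑ j : Fin (2*k), min 1 (z j ^ 2 / ε ^ 2) = k := by
      rw [pair_sum k (fun j => min 1 (z j ^ 2 / ε ^ 2))]
      have h4 : ∀ i : Fin k,
          min (1:ℝ) (z (lo k i) ^ 2 / ε ^ 2) + min 1 (z (hi k i) ^ 2 / ε ^ 2) = 1 := by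
        intro i
        rw [hzlo i, hzhi i]
        split_ifs
        · rw [hone, hzero]; ring
        · rw [hone, hzero]; ring
      calc ∑ i : Fin k, (min (1:ℝ) (z (lo k i) ^ 2 / ε ^ 2)
              + min 1 (z (hi k i) ^ 2 / ε ^ 2))
          = ∑ _i : Fin k, (1:ℝ) := Finset.sum_congr rfl fun i _ => h4 i
        _ = k := by simp
    rw [h1, h2, h3]
    ring
  calc sInf (Set.range (ffun k a C P ε)) ≤ ffun k a C P ε z :=
        csInf_le hbdd ⟨z, rfl⟩
    _ = k := hfz
end
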